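/- Let S : ℝ → [0,∞) be Borel measurable, even (S(−ξ) = S(ξ)), with S(0) = 0, and convex on (−ε, ε) for some ε > 0. If ∫_{{|ξ|<r}} dξ / S(ξ) = ∞ for every r > 0, then for every 0 ≤ α < 1 one has lim_{ξ→0} S(ξ)/|ξ|^α = 0; consequently the Pruitt index β := sup{α ≥ 0 : lim_{ξ→0} S(ξ)/|ξ|^α = 0} satisfies β ≥ 1. -/

import Mathlib

open MeasureTheory Filter Topology
open scoped ENNReal

/-- in dimension one, if `S` is even, vanishes at `0`, is convex near the
origin and the Chung–Fuchs recurrence condition holds for every radius, then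
`S(ξ)/|ξ|^α → 0` as `ξ → 0` for every `0 ≤ α < 1`; hence the Pruitt index `β` is `≥ 1`. -/
theorem stmt6 (S : ℝ → ℝ)
    (hSmeas : Measurable S)
    (hSnonneg : ∀ ξ, 0 ≤ S ξ)
    (hSeven : ∀ ξ, S (-ξ) = S ξ)
    (hS0 : S 0 = 0)
    (ε : ℝ) (hε : 0 < ε)
    (hconv : ConvexOn ℝ (Set.Ioo (-ε) ε) S)
    (hCF : ∀ r > (0 : ℝ), ∫⁻ ξ in Metric.ball (0 : ℝ) r, (ENNReal.ofReal (S ξ))⁻¹ = ∞)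
    (β : ℝ≥0∞)
    (hβ : β = ⨆ (α : ℝ) (_ : 0 ≤ α)
      (_ : Tendsto (fun ξ => ENNReal.ofReal (S ξ) / ENNReal.ofReal (|ξ| ^ α))
        (𝓝[≠] (0 : ℝ)) (𝓝 0)), ENNReal.ofReal α) :
    (∀ α : ℝ, 0 ≤ α → α < 1 →
      Tendsto (fun ξ => ENNReal.ofReal (S ξ) / ENNReal.ofReal (|ξ| ^ α))
        (𝓝[≠] (0 : ℝ)) (𝓝 0)) ∧
    (1 : ℝ≥0∞) ≤ β := by
  have hη : 0 < ε / 2 := by linarith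
  set η : ℝ := ε / 2 with hηdef
  set C : ℝ := S η / η with hCdef
  -- linear upper bound near 0
  have key : ∀ x : ℝ, 0 ≤ x → x ≤ η → S x ≤ C * x := by
    intro x hx0 hxη
    have hmem0 : (0 : ℝ) ∈ Set.Ioo (-ε) ε := ⟨by linarith, hε⟩
    have hmemη : η ∈ Set.Ioo (-ε) ε := ⟨by
        simp only [hηdef]; linarith, by simp only [hηdef]; linarith⟩
    have hl0 : 0 ≤ x / η := div_nonneg hx0 hη.le
    have hl1 : x / η ≤ 1 := (div_le_one hη).2 hxη
    have h := hconv.2 hmem0 hmemη (by linarith : (0:ℝ) ≤ 1 - x / η) hl0 (by ring)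
    have hxx : (1 - x / η) • (0:ℝ) + (x / η) • η = x := by
      simp [smul_eq_mul, div_mul_cancel₀ x hη.ne']
    rw [hxx] at h
    simp only [smul_eq_mul, hS0, mul_zero, zero_add] at h
    calc S x ≤ x / η * S η := h
      _ = C * x := by rw [hCdef]; ring
  have hS_le : ∀ ξ : ℝ, |ξ| ≤ η → S ξ ≤ C * |ξ| := by
    intro ξ hξ
    have hSabs : S |ξ| = S ξ := by
      rcases abs_cases ξ with ⟨h1, _⟩ | ⟨h1, _⟩
      · rw [h1]
      · rw [h1, hSeven]
    rw [← hSabs]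
    exact key |ξ| (abs_nonneg ξ) hξ
  have hC0 : 0 ≤ C := div_nonneg (hSnonneg η) hη.le
  have main : ∀ α : ℝ, 0 ≤ α → α < 1 →
      Tendsto (fun ξ => ENNReal.ofReal (S ξ) / ENNReal.ofReal (|ξ| ^ α))
        (𝓝[≠] (0 : ℝ)) (𝓝 0) := by
    intro α hα0 hα1
    have h1α : 0 < 1 - α := by linarith
    -- the dominating function
    have hgt : Tendsto (fun ξ : ℝ => ENNReal.ofReal (C * |ξ| ^ (1 - α)))
        (𝓝[≠] (0 : ℝ)) (𝓝 0) := by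
      have habs : Tendsto (fun ξ : ℝ => |ξ|) (𝓝 0) (𝓝 0) := by
        simpa using continuous_abs.tendsto (0 : ℝ)
      have hpow : Tendsto (fun t : ℝ => t ^ (1 - α)) (𝓝 0) (𝓝 0) := by
        have hc := Real.continuousAt_rpow_const 0 (1 - α) (Or.inr h1α.le)
        have h0 : (0 : ℝ) ^ (1 - α) = 0 := Real.zero_rpow (by linarith)
        simpa [ContinuousAt, h0] using hc
      have hmul : Tendsto (fun ξ : ℝ => C * |ξ| ^ (1 - α)) (𝓝 0) (𝓝 0) := by
        simpa using (hpow.comp habs).const_mul C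
      have := (ENNReal.continuous_ofReal.tendsto 0).comp
        (hmul.mono_left (nhdsWithin_le_nhds (s := {(0:ℝ)}ᶜ)))
      simpa [Function.comp_def] using this
    have hev : ∀ᶠ ξ in 𝓝[≠] (0 : ℝ),
        ENNReal.ofReal (S ξ) / ENNReal.ofReal (|ξ| ^ α)
          ≤ ENNReal.ofReal (C * |ξ| ^ (1 - α)) := by
      have h1 : ∀ᶠ ξ in 𝓝 (0 : ℝ), |ξ| ≤ η := by
        filter_upwards [Metric.ball_mem_nhds (0 : ℝ) hη] with ξ hξ
        rw [Metric.mem_ball, Real.dist_eq, sub_zero] at hξ; exact hξ.le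
      filter_upwards [h1.filter_mono nhdsWithin_le_nhds, self_mem_nhdsWithin]
        with ξ hξη hξ0
      have hξpos : 0 < |ξ| := abs_pos.2 hξ0
      have hαpos : 0 < |ξ| ^ α := Real.rpow_pos_of_pos hξpos α
      have hle : S ξ ≤ C * |ξ| := hS_le ξ hξη
      have hrp : |ξ| ^ (1 - α) = |ξ| / |ξ| ^ α := by
        rw [Real.rpow_sub hξpos, Real.rpow_one]
      calc ENNReal.ofReal (S ξ) / ENNReal.ofReal (|ξ| ^ α)
          ≤ ENNReal.ofReal (C * |ξ|) / ENNReal.ofReal (|ξ| ^ α) :=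
            ENNReal.div_le_div_right (ENNReal.ofReal_le_ofReal hle) _
        _ = ENNReal.ofReal (C * |ξ| / |ξ| ^ α) :=
            (ENNReal.ofReal_div_of_pos hαpos).symm
        _ = ENNReal.ofReal (C * |ξ| ^ (1 - α)) := by rw [hrp]; ring_nf
    exact tendsto_of_tendsto_of_tendsto_of_le_of_le' tendsto_const_nhds hgt
      (Eventually.of_forall fun _ => zero_le) hev
  refine ⟨main, ?_⟩
  -- now β ≥ 1
  refine le_of_forall_lt ?_
  intro c hc
  have hcne : c ≠ ∞ := hc.ne_top
  have hct : c.toReal < 1 := by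
    have := (ENNReal.toReal_lt_toReal hcne (by norm_num)).2 hc
    simpa using this
  have hct0 : 0 ≤ c.toReal := ENNReal.toReal_nonneg
  set α : ℝ := (c.toReal + 1) / 2 with hαdef
  have hα0 : 0 ≤ α := by simp only [hαdef]; linarith
  have hα1 : α < 1 := by simp only [hαdef]; linarith
  have hαgt : c.toReal < α := by simp only [hαdef]; linarith
  have hαpos : 0 < α := by simp only [hαdef]; linarith
  have h1 : c < ENNReal.ofReal α := by
    rw [← ENNReal.ofReal_toReal hcne]
    exact (ENNReal.ofReal_lt_ofReal_iff hαpos).2 hαgt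
  have h2 : ENNReal.ofReal α ≤ β := by
    rw [hβ]
    exact le_iSup_of_le α (le_iSup_of_le hα0 (le_iSup_of_le (main α hα0 hα1) le_rfl))
  exact lt_of_lt_of_le h1 h2
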